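/- In ⊗³ 𝕂⁶ (𝕂 = ℝ or ℂ), the symmetric tensor y := e₁ ∨ e₂ ∨ e₆ + e₁ ∨ e₃ ∨ e₅ + e₂ ∨ e₃ ∨ e₄ has symmetric decomposable rank exactly 3; in particular, y cannot be written as a sum of two decomposable symmetric tensors. -/

import Mathlib

open scoped BigOperators

/-- The linear map permuting tensor factors: `(permLin η z) j = z (j ∘ η)`. -/
noncomputable def permLin (𝕜 : Type*) [RCLike 𝕜] (d n : ℕ) (η : Equiv.Perm (Fin d)) :
    EuclideanSpace 𝕜 (Fin d → Fin n) →ₗ[𝕜] EuclideanSpace 𝕜 (Fin d → Fin n) where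
  toFun z := WithLp.toLp 2 (fun j => z (j ∘ η))
  map_add' _ _ := rfl
  map_smul' _ _ := rfl

/-- A tensor is symmetric if it is invariant under all permutations of factors. -/
def IsSymTensor {𝕜 : Type*} [RCLike 𝕜] {d n : ℕ}
    (z : EuclideanSpace 𝕜 (Fin d → Fin n)) : Prop :=
  ∀ η : Equiv.Perm (Fin d), permLin 𝕜 d n η z = z

/-- The elementary tensor `x 1 ⊗ ⋯ ⊗ x d`. -/
noncomputable def eTensor {𝕜 : Type*} [RCLike 𝕜] {d n : ℕ}
    (x : Fin d → EuclideanSpace 𝕜 (Fin n)) : EuclideanSpace 𝕜 (Fin d → Fin n) :=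
  WithLp.toLp 2 (fun j => ∏ i, x i (j i))

/-- The symmetrization operator `σ`. -/
noncomputable def symmetrize {𝕜 : Type*} [RCLike 𝕜] {d n : ℕ}
    (z : EuclideanSpace 𝕜 (Fin d → Fin n)) : EuclideanSpace 𝕜 (Fin d → Fin n) :=
  ((d.factorial : 𝕜)⁻¹) • ∑ η : Equiv.Perm (Fin d), permLin 𝕜 d n η z

/-- The decomposable symmetric tensor `x 1 ∨ ⋯ ∨ x d`. -/
noncomputable def vee {𝕜 : Type*} [RCLike 𝕜] {d n : ℕ}
    (x : Fin d → EuclideanSpace 𝕜 (Fin n)) : EuclideanSpace 𝕜 (Fin d → Fin n) :=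
  symmetrize (eTensor x)

/-- The tensor rank. -/
noncomputable def tensorRank {𝕜 : Type*} [RCLike 𝕜] {d n : ℕ}
    (z : EuclideanSpace 𝕜 (Fin d → Fin n)) : ℕ :=
  sInf {r : ℕ | ∃ v : Fin r → Fin d → EuclideanSpace 𝕜 (Fin n), z = ∑ i, eTensor (v i)}

/-- The symmetric decomposable rank. -/
noncomputable def symDecRank {𝕜 : Type*} [RCLike 𝕜] {d n : ℕ}
    (z : EuclideanSpace 𝕜 (Fin d → Fin n)) : ℕ :=
  sInf {r : ℕ | ∃ v : Fin r → Fin d → EuclideanSpace 𝕜 (Fin n), z = ∑ i, vee (v i)}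

/-- The injective (spectral) norm. -/
noncomputable def injNorm {𝕜 : Type*} [RCLike 𝕜] {d n : ℕ}
    (z : EuclideanSpace 𝕜 (Fin d → Fin n)) : ℝ :=
  sSup {c : ℝ | ∃ y : Fin d → EuclideanSpace 𝕜 (Fin n),
    (∀ i, ‖y i‖ = 1) ∧ c = ‖(inner 𝕜 (eTensor y) z)‖}

/-- The projective (nuclear) norm. -/
noncomputable def projNorm {𝕜 : Type*} [RCLike 𝕜] {d n : ℕ}
    (z : EuclideanSpace 𝕜 (Fin d → Fin n)) : ℝ :=
  sInf {c : ℝ | ∃ (r : ℕ) (v : Fin r → Fin d → EuclideanSpace 𝕜 (Fin n)),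
    z = ∑ i, eTensor (v i) ∧ c = ∑ i, ∏ j, ‖v i j‖}

section Aux
variable {𝕜 : Type*} [RCLike 𝕜]
open Equiv

lemma sum_perm3' {M : Type*} [AddCommMonoid M] (f : Equiv.Perm (Fin 3) → M) : ∑ η, f η =
    f 1 + f (swap 0 1) + f (swap 0 2) + f (swap 1 2) + f (swap 0 1 * swap 1 2) + f (swap 1 2 * swap 0 1) := by
  rw [show (Finset.univ : Finset (Equiv.Perm (Fin 3))) =
    {1, swap 0 1, swap 0 2, swap 1 2, swap 0 1 * swap 1 2, swap 1 2 * swap 0 1} by decide]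
  rw [Finset.sum_insert (by decide), Finset.sum_insert (by decide), Finset.sum_insert (by decide),
    Finset.sum_insert (by decide), Finset.sum_insert (by decide), Finset.sum_singleton]
  abel

lemma vee_apply (x : Fin 3 → EuclideanSpace 𝕜 (Fin 6)) (j : Fin 3 → Fin 6) :
    vee x j = (6 : 𝕜)⁻¹ *
      (x 0 (j 0) * x 1 (j 1) * x 2 (j 2) + x 0 (j 1) * x 1 (j 0) * x 2 (j 2)
      + x 0 (j 2) * x 1 (j 1) * x 2 (j 0) + x 0 (j 0) * x 1 (j 2) * x 2 (j 1)
      + x 0 (j 1) * x 1 (j 2) * x 2 (j 0) + x 0 (j 2) * x 1 (j 0) * x 2 (j 1)) := by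
  show (((Nat.factorial 3 : ℕ) : 𝕜)⁻¹ • ∑ η : Equiv.Perm (Fin 3), permLin 𝕜 3 6 η (eTensor x)) j = _
  rw [PiLp.smul_apply, sum_perm3' (fun η => permLin 𝕜 3 6 η (eTensor x))]
  have h : ∀ η : Equiv.Perm (Fin 3), (permLin 𝕜 3 6 η (eTensor x)) j
      = x 0 (j (η 0)) * x 1 (j (η 1)) * x 2 (j (η 2)) := by
    intro η
    show eTensor x (j ∘ η) = _
    show (∏ i, x i ((j ∘ η) i)) = _
    rw [Fin.prod_univ_three]
    rfl
  simp only [PiLp.add_apply, h]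
  have e0 : ((1 : Equiv.Perm (Fin 3)) 0 = 0) ∧ ((1 : Equiv.Perm (Fin 3)) 1 = 1) ∧ ((1 : Equiv.Perm (Fin 3)) 2 = 2) := by decide
  have e1 : (swap (0:Fin 3) 1) 0 = 1 ∧ (swap (0:Fin 3) 1) 1 = 0 ∧ (swap (0:Fin 3) 1) 2 = 2 := by decide
  have e2 : (swap (0:Fin 3) 2) 0 = 2 ∧ (swap (0:Fin 3) 2) 1 = 1 ∧ (swap (0:Fin 3) 2) 2 = 0 := by decide
  have e3 : (swap (1:Fin 3) 2) 0 = 0 ∧ (swap (1:Fin 3) 2) 1 = 2 ∧ (swap (1:Fin 3) 2) 2 = 1 := by decide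
  have e4 : ((swap (0:Fin 3) 1 * swap 1 2 : Equiv.Perm (Fin 3))) 0 = 1 ∧ ((swap (0:Fin 3) 1 * swap 1 2 : Equiv.Perm (Fin 3))) 1 = 2 ∧ ((swap (0:Fin 3) 1 * swap 1 2 : Equiv.Perm (Fin 3))) 2 = 0 := by decide
  have e5 : ((swap (1:Fin 3) 2 * swap 0 1 : Equiv.Perm (Fin 3))) 0 = 2 ∧ ((swap (1:Fin 3) 2 * swap 0 1 : Equiv.Perm (Fin 3))) 1 = 0 ∧ ((swap (1:Fin 3) 2 * swap 0 1 : Equiv.Perm (Fin 3))) 2 = 1 := by decide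
  rw [e0.1, e0.2.1, e0.2.2, e1.1, e1.2.1, e1.2.2, e2.1, e2.2.1, e2.2.2, e3.1, e3.2.1, e3.2.2,
    e4.1, e4.2.1, e4.2.2, e5.1, e5.2.1, e5.2.2]
  norm_num [Nat.factorial]

/-- indicator count -/
def chi (i p q : Fin 6) : ℕ :=
  (if ({i,p,q} : Multiset (Fin 6)) = {0,1,5} then 1 else 0)
  + (if ({i,p,q} : Multiset (Fin 6)) = {0,2,4} then 1 else 0)
  + (if ({i,p,q} : Multiset (Fin 6)) = {1,2,3} then 1 else 0)

/-- the example tensor -/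
noncomputable def Yt (𝕜 : Type*) [RCLike 𝕜] : EuclideanSpace 𝕜 (Fin 3 → Fin 6) :=
  vee ![EuclideanSpace.single 0 1, EuclideanSpace.single 1 1, EuclideanSpace.single 5 1]
  + vee ![EuclideanSpace.single 0 1, EuclideanSpace.single 2 1, EuclideanSpace.single 4 1]
  + vee ![EuclideanSpace.single 1 1, EuclideanSpace.single 2 1, EuclideanSpace.single 3 1]

set_option maxHeartbeats 2000000 in
lemma y_apply (i p q : Fin 6) : Yt 𝕜 ![i,p,q] = (6:𝕜)⁻¹ * (chi i p q : ℕ) := by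
  show (_ + _ + _ : EuclideanSpace 𝕜 (Fin 3 → Fin 6)) ![i,p,q] = _
  simp only [PiLp.add_apply, vee_apply, Matrix.cons_val_zero, Matrix.cons_val_one,
    Matrix.head_cons, Matrix.cons_val_two, Matrix.tail_cons, EuclideanSpace.single_apply]
  fin_cases i <;> fin_cases p <;> fin_cases q <;> simp (config := { decide := true }) [chi]

end Aux
section Main
variable {𝕜 : Type*} [RCLike 𝕜]

lemma vee_zero : vee (fun _ => (0 : EuclideanSpace 𝕜 (Fin 6)) : Fin 3 → _) = 0 := by
  ext j
  rw [vee_apply]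
  show _ = (0 : EuclideanSpace 𝕜 (Fin 3 → Fin 6)) j
  norm_num

lemma scalar_key (u v c : Fin 6 → 𝕜)
    (h : ∀ p q : Fin 6, u p * v q + v p * u q = ∑ i, c i * ((6:𝕜)⁻¹ * (chi i p q : ℕ))) :
    u 1 * v 5 + v 1 * u 5 = 0 := by
  have hz : ∀ p q : Fin 6, (∀ i : Fin 6, chi i p q = 0) → u p * v q + v p * u q = 0 := by
    intro p q h0
    rw [h p q, Fin.sum_univ_six, h0 0, h0 1, h0 2, h0 3, h0 4, h0 5]
    norm_num
  have h33 : u 3 * v 3 = 0 := by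
    have h2 : (2:𝕜) * (u 3 * v 3) = 0 := by linear_combination hz 3 3 (by decide)
    exact (mul_eq_zero.mp h2).resolve_left two_ne_zero
  have h44 : u 4 * v 4 = 0 := by
    have h2 : (2:𝕜) * (u 4 * v 4) = 0 := by linear_combination hz 4 4 (by decide)
    exact (mul_eq_zero.mp h2).resolve_left two_ne_zero
  have h55 : u 5 * v 5 = 0 := by
    have h2 : (2:𝕜) * (u 5 * v 5) = 0 := by linear_combination hz 5 5 (by decide)
    exact (mul_eq_zero.mp h2).resolve_left two_ne_zero
  have h34 := hz 3 4 (by decide)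
  have h35 := hz 3 5 (by decide)
  have h45 := hz 4 5 (by decide)
  have h14 := hz 1 4 (by decide)
  have hchi : ∀ i : Fin 6, chi i 1 5 = chi i 2 4 := by decide
  have heq : u 1 * v 5 + v 1 * u 5 = u 2 * v 4 + v 2 * u 4 := by
    rw [h 1 5, h 2 4]
    exact Finset.sum_congr rfl (fun i _ => by rw [hchi i])
  have hcase : (u 3 = 0 ∧ u 4 = 0 ∧ u 5 = 0) ∨ (v 3 = 0 ∧ v 4 = 0 ∧ v 5 = 0) := by
    by_cases h3 : u 3 = 0
    · by_cases h4 : u 4 = 0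
      · by_cases h5 : u 5 = 0
        · exact Or.inl ⟨h3, h4, h5⟩
        · refine Or.inr ⟨?_, ?_, (mul_eq_zero.mp h55).resolve_left h5⟩
          · have e : v 3 * u 5 = 0 := by linear_combination h35 - v 5 * h3
            exact (mul_eq_zero.mp e).resolve_right h5
          · have e : v 4 * u 5 = 0 := by linear_combination h45 - v 5 * h4
            exact (mul_eq_zero.mp e).resolve_right h5
      · have hv4 : v 4 = 0 := (mul_eq_zero.mp h44).resolve_left h4
        refine Or.inr ⟨?_, hv4, ?_⟩
        · have e : v 3 * u 4 = 0 := by linear_combination h34 - v 4 * h3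
          exact (mul_eq_zero.mp e).resolve_right h4
        · have e : u 4 * v 5 = 0 := by linear_combination h45 - u 5 * hv4
          exact (mul_eq_zero.mp e).resolve_left h4
    · have hv3 : v 3 = 0 := (mul_eq_zero.mp h33).resolve_left h3
      refine Or.inr ⟨hv3, ?_, ?_⟩
      · have e : u 3 * v 4 = 0 := by linear_combination h34 - u 4 * hv3
        exact (mul_eq_zero.mp e).resolve_left h3
      · have e : u 3 * v 5 = 0 := by linear_combination h35 - u 5 * hv3
        exact (mul_eq_zero.mp e).resolve_left h3
  rcases hcase with ⟨hu3, hu4, hu5⟩ | ⟨hv3, hv4, hv5⟩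
  · have e1 : u 1 * v 4 = 0 := by linear_combination h14 - v 1 * hu4
    rcases mul_eq_zero.mp e1 with h' | h'
    · rw [h', hu5]; ring
    · linear_combination heq + u 2 * h' + v 2 * hu4
  · have e1 : v 1 * u 4 = 0 := by linear_combination h14 - u 1 * hv4
    rcases mul_eq_zero.mp e1 with h' | h'
    · rw [h', hv5]; ring
    · linear_combination heq + u 2 * hv4 + v 2 * h'

/-- the slice family of the example tensor -/
noncomputable def Mfam (𝕜 : Type*) [RCLike 𝕜] : Fin 6 → Fin 6 → Fin 6 → 𝕜 :=
  fun i p q => Yt 𝕜 ![i,p,q]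

noncomputable def uu (a b : Fin 3 → EuclideanSpace 𝕜 (Fin 6)) : Fin 6 → EuclideanSpace 𝕜 (Fin 6) :=
  ![a 1, a 0, a 0, b 1, b 0, b 0]
noncomputable def vv (a b : Fin 3 → EuclideanSpace 𝕜 (Fin 6)) : Fin 6 → EuclideanSpace 𝕜 (Fin 6) :=
  ![a 2, a 2, a 1, b 2, b 2, b 1]

/-- the six decomposable symmetric matrices -/
noncomputable def Pfam (a b : Fin 3 → EuclideanSpace 𝕜 (Fin 6)) : Fin 6 → Fin 6 → Fin 6 → 𝕜 :=
  fun k p q => uu a b k p * vv a b k q + vv a b k p * uu a b k q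

noncomputable def wfam (a b : Fin 3 → EuclideanSpace 𝕜 (Fin 6)) : Fin 6 → Fin 6 → 𝕜 :=
  fun i => ![(6:𝕜)⁻¹ * a 0 i, (6:𝕜)⁻¹ * a 1 i, (6:𝕜)⁻¹ * a 2 i,
             (6:𝕜)⁻¹ * b 0 i, (6:𝕜)⁻¹ * b 1 i, (6:𝕜)⁻¹ * b 2 i]

lemma key (a b : Fin 3 → EuclideanSpace 𝕜 (Fin 6)) : Yt 𝕜 ≠ vee a + vee b := by
  intro hy
  classical
  have hMP : ∀ i, Mfam 𝕜 i = ∑ k, wfam a b i k • Pfam a b k := by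
    intro i; funext p q
    have hYv : Yt 𝕜 ![i,p,q] = vee a ![i,p,q] + vee b ![i,p,q] := by rw [hy]; rfl
    show Yt 𝕜 ![i,p,q] = _
    rw [hYv, vee_apply, vee_apply]
    rw [show ((∑ k, wfam a b i k • Pfam a b k) p q : 𝕜)
        = ∑ k, wfam a b i k * Pfam a b k p q by
      rw [Finset.sum_apply, Finset.sum_apply]
      exact Finset.sum_congr rfl (fun k _ => rfl)]
    rw [Fin.sum_univ_six]
    show _ = (6:𝕜)⁻¹ * a 0 i * (a 1 p * a 2 q + a 2 p * a 1 q)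
      + (6:𝕜)⁻¹ * a 1 i * (a 0 p * a 2 q + a 2 p * a 0 q)
      + (6:𝕜)⁻¹ * a 2 i * (a 0 p * a 1 q + a 1 p * a 0 q)
      + (6:𝕜)⁻¹ * b 0 i * (b 1 p * b 2 q + b 2 p * b 1 q)
      + (6:𝕜)⁻¹ * b 1 i * (b 0 p * b 2 q + b 2 p * b 0 q)
      + (6:𝕜)⁻¹ * b 2 i * (b 0 p * b 1 q + b 1 p * b 0 q)
    have ja : (![i,p,q] : Fin 3 → Fin 6) 0 = i ∧ (![i,p,q] : Fin 3 → Fin 6) 1 = p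
        ∧ (![i,p,q] : Fin 3 → Fin 6) 2 = q := ⟨rfl, rfl, rfl⟩
    rw [ja.1, ja.2.1, ja.2.2]
    ring
  have hind : LinearIndependent 𝕜 (Mfam 𝕜) := by
    rw [Fintype.linearIndependent_iff]
    intro g hg
    have hv : ∀ p q : Fin 6, ∑ i, g i * ((6:𝕜)⁻¹ * (chi i p q : ℕ)) = 0 := by
      intro p q
      have h1 := congrFun (congrFun hg p) q
      rw [show ((∑ i, g i • Mfam 𝕜 i) p q : 𝕜) = ∑ i, g i * Mfam 𝕜 i p q by
        rw [Finset.sum_apply, Finset.sum_apply]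
        exact Finset.sum_congr rfl (fun k _ => rfl)] at h1
    -- rewrite Mfam values
      rw [show (∑ i, g i * Mfam 𝕜 i p q) = ∑ i, g i * ((6:𝕜)⁻¹ * (chi i p q : ℕ)) by
        exact Finset.sum_congr rfl (fun k _ => by rw [Mfam, y_apply])] at h1
      exact h1
    intro i
    have h6 : ((6:𝕜)⁻¹ : 𝕜) ≠ 0 := by norm_num
    have solve : ∀ (p q : Fin 6) (i0 : Fin 6), (∀ j : Fin 6, chi j p q = if j = i0 then 1 else 0) →
        g i0 = 0 := by
      intro p q i0 hch
      have h1 := hv p q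
      rw [Fin.sum_univ_six, hch 0, hch 1, hch 2, hch 3, hch 4, hch 5] at h1
      fin_cases i0 <;>
      · simp (config := { decide := true }) only [Nat.cast_ite, Nat.cast_one, Nat.cast_zero,
          mul_one, mul_zero, add_zero, zero_add, if_true, if_false] at h1
        have := (mul_eq_zero.mp h1).resolve_right h6
        simpa using this
    fin_cases i
    · exact solve 1 5 0 (by decide)
    · exact solve 0 5 1 (by decide)
    · exact solve 0 4 2 (by decide)
    · exact solve 1 2 3 (by decide)
    · exact solve 0 2 4 (by decide)
    · exact solve 0 1 5 (by decide)
  have hUV : Submodule.span 𝕜 (Set.range (Mfam 𝕜)) ≤ Submodule.span 𝕜 (Set.range (Pfam a b)) := by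
    rw [Submodule.span_le]
    rintro _ ⟨i, rfl⟩
    rw [hMP i]
    exact Submodule.sum_mem _ fun k _ => Submodule.smul_mem _ _ (Submodule.subset_span ⟨k, rfl⟩)
  have hrU : Module.finrank 𝕜 (Submodule.span 𝕜 (Set.range (Mfam 𝕜))) = 6 := by
    rw [finrank_span_eq_card hind, Fintype.card_fin]
  have hrV : Module.finrank 𝕜 (Submodule.span 𝕜 (Set.range (Pfam a b))) ≤ 6 := by
    have := finrank_range_le_card (R := 𝕜) (Pfam a b)
    simpa [Set.finrank, Fintype.card_fin] using this
  have hEq : Submodule.span 𝕜 (Set.range (Mfam 𝕜)) = Submodule.span 𝕜 (Set.range (Pfam a b)) :=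
    Submodule.eq_of_le_of_finrank_le hUV (le_trans hrV (le_of_eq hrU.symm))
  have hPz : ∀ k, Pfam a b k 1 5 = 0 := by
    intro k
    have hk : Pfam a b k ∈ Submodule.span 𝕜 (Set.range (Mfam 𝕜)) :=
      hEq ▸ Submodule.subset_span ⟨k, rfl⟩
    obtain ⟨c, hc⟩ := (Submodule.mem_span_range_iff_exists_fun 𝕜).mp hk
    refine scalar_key (fun p => uu a b k p) (fun p => vv a b k p) c ?_
    intro p q
    have h1 := congrFun (congrFun hc p) q
    rw [show ((∑ i, c i • Mfam 𝕜 i) p q : 𝕜) = ∑ i, c i * ((6:𝕜)⁻¹ * (chi i p q : ℕ)) by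
      rw [Finset.sum_apply, Finset.sum_apply]
      exact Finset.sum_congr rfl fun i _ => by
        show c i * Mfam 𝕜 i p q = _
        rw [Mfam, y_apply]] at h1
    exact h1.symm
  have hfin := congrFun (congrFun (hMP 0) 1) 5
  rw [show ((∑ k, wfam a b 0 k • Pfam a b k) 1 5 : 𝕜) = ∑ k, wfam a b 0 k * Pfam a b k 1 5 by
    rw [Finset.sum_apply, Finset.sum_apply]
    exact Finset.sum_congr rfl fun k _ => rfl] at hfin
  rw [show (Mfam 𝕜 0 1 5 : 𝕜) = (6:𝕜)⁻¹ * (chi 0 1 5 : ℕ) from y_apply 0 1 5] at hfin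
  rw [show (chi 0 1 5 : ℕ) = 1 from by decide] at hfin
  have : ((6:𝕜)⁻¹ * ((1:ℕ):𝕜) : 𝕜) = 0 := by
    rw [hfin]
    refine Finset.sum_eq_zero fun k _ => ?_
    rw [hPz k, mul_zero]
    -- done
  norm_num at this
end Main

/-- In `⊗³ 𝕂⁶`, the symmetric tensor
`y = e₁ ∨ e₂ ∨ e₆ + e₁ ∨ e₃ ∨ e₅ + e₂ ∨ e₃ ∨ e₄` has symmetric decomposable rank exactly 3;
in particular it is not a sum of two decomposable symmetric tensors. -/
theorem symDecRank_example_eq_three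
    {𝕜 : Type*} [RCLike 𝕜] :
    letI e : Fin 6 → EuclideanSpace 𝕜 (Fin 6) := fun i => EuclideanSpace.single i 1
    letI y : EuclideanSpace 𝕜 (Fin 3 → Fin 6) :=
      vee ![e 0, e 1, e 5] + vee ![e 0, e 2, e 4] + vee ![e 1, e 2, e 3]
    symDecRank y = 3 ∧
      ¬ ∃ a b : Fin 3 → EuclideanSpace 𝕜 (Fin 6), y = vee a + vee b := by
  show symDecRank (Yt 𝕜) = 3 ∧ ¬ ∃ a b : Fin 3 → EuclideanSpace 𝕜 (Fin 6), Yt 𝕜 = vee a + vee b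
  constructor
  · have h3 : 3 ∈ {r : ℕ | ∃ v : Fin r → Fin 3 → EuclideanSpace 𝕜 (Fin 6),
        Yt 𝕜 = ∑ i, vee (v i)} := by
      refine ⟨![![EuclideanSpace.single 0 1, EuclideanSpace.single 1 1, EuclideanSpace.single 5 1],
        ![EuclideanSpace.single 0 1, EuclideanSpace.single 2 1, EuclideanSpace.single 4 1],
        ![EuclideanSpace.single 1 1, EuclideanSpace.single 2 1, EuclideanSpace.single 3 1]], ?_⟩
      rw [Fin.sum_univ_three]
      rfl
    have hlb : ∀ r ∈ {r : ℕ | ∃ v : Fin r → Fin 3 → EuclideanSpace 𝕜 (Fin 6),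
        Yt 𝕜 = ∑ i, vee (v i)}, 3 ≤ r := by
      intro r hr
      by_contra hlt
      push_neg at hlt
      obtain ⟨v, hv⟩ := hr
      interval_cases r
      · exact key (fun _ => 0) (fun _ => 0) (by rw [hv]; simp [vee_zero])
      · exact key (v 0) (fun _ => 0) (by rw [hv, Fin.sum_univ_one, vee_zero, add_zero])
      · exact key (v 0) (v 1) (by rw [hv, Fin.sum_univ_two])
    exact le_antisymm (Nat.sInf_le h3) (hlb _ (Nat.sInf_mem ⟨3, h3⟩))
  · rintro ⟨a, b, hab⟩
    exact key a b hab
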